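/- (Basic blocks code the towers of the Pascal adic) For all n ≥ 1, all k with 0 ≤ k ≤ n, every x' ∈ X, and every i with 0 ≤ i < C(n,k): the 0-th coordinate of T^i(1^k 0^{n−k} x') equals 1 if and only if the i-th letter of the basic block B(n,k) is b. In other words, B(n,k) is the coding, by the first coordinate (1 ↦ b, 0 ↦ a), of the orbit segment of length C(n,k) starting at the minimal path 1^k 0^{n−k} x' through the vertex (n,k). -/

import Mathlib

/-- Concatenation of a finite word `w` with an infinite tail `x`. -/
def cat (w : List Bool) (x : ℕ → Bool) : ℕ → Bool :=
  fun i => if h : i < w.length then w.get ⟨i, h⟩ else x (i - w.length)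

/-- `T` satisfies the Pascal adic law: `T(0ⁿ1ᵐ10x') = 1ᵐ0ⁿ01x'`
(here `0 = false`, `1 = true`). -/
def PascalLaw (T : (ℕ → Bool) → (ℕ → Bool)) : Prop :=
  ∀ (n m : ℕ) (x' : ℕ → Bool),
    T (cat (List.replicate n false ++ List.replicate m true ++ [true, false]) x')
      = cat (List.replicate m true ++ List.replicate n false ++ [false, true]) x'

/-- The basic blocks of the Pascal triangle of words (`a = false`, `b = true`):
`B(n,0) = a`, `B(n,n) = b`, and `B(n,k) = B(n−1,k) ++ B(n−1,k−1)` for `0 < k < n`. -/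
def Bblk : ℕ → ℕ → List Bool
  | 0, _ => [true]
  | _ + 1, 0 => [false]
  | n + 1, k + 1 => if k + 1 = n + 1 then [true] else Bblk n (k + 1) ++ Bblk n k

/-- Prepending a letter to an infinite tail. -/
def cns (b : Bool) (x : ℕ → Bool) : ℕ → Bool := fun i => if i = 0 then b else x (i - 1)

lemma cat_snoc (w : List Bool) (b : Bool) (x : ℕ → Bool) :
    cat (w ++ [b]) x = cat w (cns b x) := by
  funext i
  simp only [cat, cns, List.length_append, List.length_singleton, List.get_eq_getElem]
  rcases lt_trichotomy i w.length with h | h | h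
  · rw [dif_pos (by omega), dif_pos h, List.getElem_append_left h]
  · subst h
    rw [dif_pos (by omega), dif_neg (by omega), if_pos (by omega)]
    simp
  · rw [dif_neg (by omega), dif_neg (by omega), if_neg (by omega)]
    have h4 : i - (w.length + 1) = i - w.length - 1 := by omega
    rw [h4]

lemma cat_snoc' (w : List Bool) (b : Bool) (x : ℕ → Bool) :
    cat w (cns b x) = cat (w ++ [b]) x := (cat_snoc w b x).symm

lemma Bblk_length : ∀ n k, k ≤ n → (Bblk n k).length = n.choose k := by
  intro n
  induction n with
  | zero => intro k hk; interval_cases k; rfl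
  | succ n IH =>
    intro k hk
    match k with
    | 0 => simp [Bblk]
    | k + 1 =>
      by_cases h : k + 1 = n + 1
      · rw [Bblk, if_pos h, h, Nat.choose_self]
        rfl
      · have hk' : k + 1 ≤ n := by omega
        rw [Bblk, if_neg h]
        simp [IH (k+1) hk', IH k (by omega), Nat.choose_succ_succ, Nat.add_comm]

lemma key (T : (ℕ → Bool) → (ℕ → Bool)) (hT : PascalLaw T) :
    ∀ n, 1 ≤ n → ∀ k, k ≤ n → ∀ x' : ℕ → Bool,
    (∀ i, i < n.choose k →
      (T^[i] (cat (List.replicate k true ++ List.replicate (n - k) false) x')) 0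
        = (Bblk n k).getD i false)
    ∧ T^[n.choose k - 1] (cat (List.replicate k true ++ List.replicate (n - k) false) x')
        = cat (List.replicate (n - k) false ++ List.replicate k true) x' := by
  intro n
  induction n with
  | zero => omega
  | succ n IH =>
    intro _ k hk x'
    match k with
    | 0 =>
      refine ⟨?_, by simp⟩
      intro i hi
      rw [Nat.choose_zero_right] at hi
      interval_cases i
      simp [Bblk, cat]
    | k + 1 =>
      by_cases hkn : k + 1 = n + 1
      · have hk0 : n + 1 - (k + 1) = 0 := by omega
        constructor
        · intro i hi
          rw [hkn, Nat.choose_self] at hi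
          interval_cases i
          rw [Bblk, if_pos hkn]
          simp [cat, hk0]
        · rw [hkn, Nat.choose_self]
          simp [hk0]
      · have hk' : k + 1 ≤ n := by omega
        have hn1 : 1 ≤ n := by omega
        obtain ⟨IH1a, IH1b⟩ := IH hn1 (k+1) hk' (cns false x')
        obtain ⟨IH2a, IH2b⟩ := IH hn1 k (by omega) (cns true x')
        have hC1 : 0 < n.choose (k+1) := Nat.choose_pos hk'
        have hC2 : 0 < n.choose k := Nat.choose_pos (by omega)
        have hchoose : (n+1).choose (k+1) = n.choose (k+1) + n.choose k := by
          rw [Nat.choose_succ_succ, Nat.add_comm]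
        have hB : Bblk (n+1) (k+1) = Bblk n (k+1) ++ Bblk n k := by
          rw [Bblk, if_neg hkn]
        have hlen1 : (Bblk n (k+1)).length = n.choose (k+1) := Bblk_length n (k+1) hk'
        -- start state rewriting
        have hstart : cat (List.replicate (k+1) true ++ List.replicate (n+1-(k+1)) false) x'
            = cat (List.replicate (k+1) true ++ List.replicate (n-(k+1)) false) (cns false x') := by
          have h1 : n + 1 - (k+1) = (n - (k+1)) + 1 := by omega
          rw [h1, List.replicate_succ' (n := n - (k+1)) (a := false), ← List.append_assoc, cat_snoc]
        -- transition from the top of the first subtower to the bottom of the second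
        have htrans : T (cat (List.replicate (n-(k+1)) false ++ List.replicate (k+1) true) (cns false x'))
            = cat (List.replicate k true ++ List.replicate (n-k) false) (cns true x') := by
          have e1 : (List.replicate (n-(k+1)) false ++ List.replicate (k+1) true) ++ [false]
              = (List.replicate (n-(k+1)) false ++ List.replicate k true) ++ [true, false] := by
            simp [List.replicate_succ' (n := k) (a := true), List.append_assoc]
          have e2 : (List.replicate k true ++ List.replicate (n-k) false) ++ [true]
              = (List.replicate k true ++ List.replicate (n-(k+1)) false) ++ [false, true] := by
            have h3 : n - k = (n - (k+1)) + 1 := by omega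
            simp [h3, List.replicate_succ' (n := n-(k+1)) (a := false), List.append_assoc]
          rw [cat_snoc', cat_snoc', e1, hT (n-(k+1)) k x', ← e2]
        -- the state after n.choose (k+1) steps
        have hmid : T^[n.choose (k+1)]
              (cat (List.replicate (k+1) true ++ List.replicate (n+1-(k+1)) false) x')
            = cat (List.replicate k true ++ List.replicate (n-k) false) (cns true x') := by
          have h4 : n.choose (k+1) = 1 + (n.choose (k+1) - 1) := by omega
          rw [hstart, h4, Function.iterate_add_apply, IH1b, Function.iterate_one, htrans]
        constructor
        · intro i hi
          rcases lt_or_ge i (n.choose (k+1)) with h | h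
          · rw [hstart, IH1a i h, hB,
              List.getD_append _ _ _ _ (by rw [hlen1]; exact h)]
          · have hj : i - n.choose (k+1) < n.choose k := by omega
            have hi' : i = (i - n.choose (k+1)) + n.choose (k+1) := by omega
            rw [hi', Function.iterate_add_apply, hmid, IH2a _ hj, hB,
              List.getD_append_right _ _ _ _ (by omega)]
            congr 1
            omega
        · have h5 : (n+1).choose (k+1) - 1 = (n.choose k - 1) + n.choose (k+1) := by omega
          rw [h5, Function.iterate_add_apply, hmid, IH2b, cat_snoc']
          congr 1
          have h6 : n + 1 - (k+1) = n - k := by omega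
          simp [h6, List.replicate_succ' (n := k) (a := true), List.append_assoc]

/-- The basic block `B(n,k)` is the coding, by the first coordinate
(`1 ↦ b = true`, `0 ↦ a = false`), of the orbit segment of length `C(n,k)`
starting at the minimal path `1^k 0^{n-k} x'` through the vertex `(n,k)`. -/
theorem basic_block_codes_tower (T : (ℕ → Bool) → (ℕ → Bool)) (hT : PascalLaw T)
    (n k : ℕ) (hn : 1 ≤ n) (hk : k ≤ n) (x' : ℕ → Bool)
    (i : ℕ) (hi : i < Nat.choose n k) :
    (T^[i] (cat (List.replicate k true ++ List.replicate (n - k) false) x')) 0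
      = (Bblk n k).getD i false := by
  exact (key T hT n hn k hk x').1 i hi
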